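/- Let h := χ_ℙ + ε, where χ_ℙ is the indicator function of the primes and ε(n) = 1 if n = 1 and 0 otherwise, and let h⁻¹ denote the Dirichlet inverse of h. Then h⁻¹(1) = 1, and for every n ≥ 2 with prime factorization n = p₁^{α₁}⋯p_r^{α_r}, h⁻¹(n) · (α₁! ⋯ α_r!) = (−1)^{Ω(n)} · Ω(n)!; that is, h⁻¹(n) = λ(n) · Ω(n)! / ∏_{p^α ∥ n} α!. -/

import Mathlib

open ArithmeticFunction Finset
open scoped ArithmeticFunction.Omega

private lemma omega_sum' (n : ℕ) : Ω n = ∑ p ∈ n.primeFactors, n.factorization p := by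
  rw [cardFactors_apply, ← Nat.toFinset_factors]
  rw [show n.primeFactorsList.length = Multiset.card (n.primeFactorsList : Multiset ℕ) from rfl,
    ← Multiset.toFinset_sum_count_eq]
  simp

private lemma filter_prime_divisors (n : ℕ) (hn : n ≠ 0) :
    n.divisors.filter Nat.Prime = n.primeFactors := by
  ext p
  simp [Nat.mem_divisors, Nat.mem_primeFactors, hn, and_comm]

private lemma hinv_rec (h hinv : ArithmeticFunction ℝ)
    (hh : ∀ n : ℕ, 0 < n →
      h n = (if n.Prime then 1 else 0) + (if n = 1 then 1 else 0))
    (hinv_eq : h * hinv = 1) (n : ℕ) (hn : 2 ≤ n) :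
    hinv n = - ∑ p ∈ n.primeFactors, hinv (n / p) := by
  have hn0 : n ≠ 0 := by omega
  have hn1 : n ≠ 1 := by omega
  have h0 : (h * hinv) n = 0 := by rw [hinv_eq, ArithmeticFunction.one_apply]; simp [hn1]
  rw [ArithmeticFunction.mul_apply, Nat.sum_divisorsAntidiagonal (fun d e => h d * hinv e)] at h0
  have hsum : ∑ d ∈ n.divisors, h d * hinv (n / d) =
      (∑ d ∈ n.divisors, (if d.Prime then 1 else 0) * hinv (n / d)) +
      (∑ d ∈ n.divisors, (if d = 1 then 1 else 0) * hinv (n / d)) := by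
    rw [← Finset.sum_add_distrib]
    refine Finset.sum_congr rfl fun d hd => ?_
    rw [hh d (Nat.pos_of_mem_divisors hd), add_mul]
  rw [hsum] at h0
  have h1 : ∑ d ∈ n.divisors, (if d.Prime then 1 else 0) * hinv (n / d) =
      ∑ p ∈ n.primeFactors, hinv (n / p) := by
    rw [← filter_prime_divisors n hn0, Finset.sum_filter]
    refine Finset.sum_congr rfl fun d _ => ?_
    split <;> simp
  have h2 : ∑ d ∈ n.divisors, (if d = 1 then 1 else 0) * hinv (n / d) = hinv n := by
    rw [Finset.sum_congr rfl (fun d _ => by rw [ite_mul, one_mul, zero_mul]),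
      Finset.sum_ite_eq' n.divisors 1 (fun d => hinv (n / d))]
    simp [Nat.one_mem_divisors.2 hn0]
  rw [h1, h2] at h0
  linarith

private lemma hinv_formula (h hinv : ArithmeticFunction ℝ)
    (hh : ∀ n : ℕ, 0 < n →
      h n = (if n.Prime then 1 else 0) + (if n = 1 then 1 else 0))
    (hinv_eq : h * hinv = 1) :
    ∀ n : ℕ, 0 < n → hinv n =
      (-1 : ℝ) ^ (Ω n) * ((Ω n).factorial : ℝ) /
        ∏ p ∈ n.primeFactors, ((n.factorization p).factorial : ℝ) := by
  have h1 : hinv 1 = 1 := by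
    have := congrArg (fun f : ArithmeticFunction ℝ => f 1) hinv_eq
    simp only [ArithmeticFunction.mul_apply, Nat.divisorsAntidiagonal_one,
      Finset.sum_singleton, ArithmeticFunction.one_one] at this
    have hh1 : h 1 = 1 := by rw [hh 1 one_pos]; simp [Nat.not_prime_one]
    rw [hh1, one_mul] at this
    exact this
  intro n
  induction n using Nat.strong_induction_on with
  | _ n IH =>
    intro hn0
    rcases eq_or_lt_of_le (Nat.one_le_iff_ne_zero.2 hn0.ne') with h1' | hn2
    · rw [← h1', h1]; simp
    · -- n ≥ 2
      have hn2' : 2 ≤ n := hn2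
      have hn0' : n ≠ 0 := by omega
      set S := n.primeFactors with hS
      set D : ℝ := ∏ p ∈ S, ((n.factorization p).factorial : ℝ) with hD
      have hDpos : 0 < D := Finset.prod_pos fun p _ => by positivity
      -- Ω n ≥ 1
      obtain ⟨q, hqS⟩ := Nat.nonempty_primeFactors.2 hn2
      have hΩpos : 1 ≤ Ω n := by
        have hq1 : 1 ≤ n.factorization q :=
          (Nat.Prime.factorization_pos_of_dvd (Nat.prime_of_mem_primeFactors hqS) hn0'
            (Nat.dvd_of_mem_primeFactors hqS))
        calc 1 ≤ n.factorization q := hq1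
          _ ≤ ∑ p ∈ S, n.factorization p :=
            Finset.single_le_sum (fun p _ => Nat.zero_le _) hqS
          _ = Ω n := (omega_sum' n).symm
      obtain ⟨k, hk⟩ : ∃ k, Ω n = k + 1 := ⟨Ω n - 1, by omega⟩
      have hstep : ∀ p ∈ S, hinv (n / p) =
          (-1 : ℝ) ^ k * (k.factorial : ℝ) * (n.factorization p : ℝ) / D := by
        intro p hpS
        obtain ⟨hp, hpd, -⟩ := Nat.mem_primeFactors.1 hpS
        set m := n / p with hm
        have hmd : m ∣ n := Nat.div_dvd_of_dvd hpd
        have hm0 : 0 < m := Nat.div_pos (Nat.le_of_dvd hn0 hpd) hp.pos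
        have hmn : m < n := Nat.div_lt_self hn0 hp.one_lt
        have hnm : n = p * m := (Nat.mul_div_cancel' hpd).symm
        have hΩ : Ω n = Ω m + 1 := by
          rw [hnm, cardFactors_mul hp.pos.ne' hm0.ne', cardFactors_apply_prime hp, add_comm]
        have hΩm : Ω m = k := by omega
        have hfac : m.factorization = n.factorization - p.factorization :=
          Nat.factorization_div hpd
        have hαp : 0 < n.factorization p := Nat.Prime.factorization_pos_of_dvd hp hn0' hpd
        have hfacr : ∀ r, r ≠ p → m.factorization r = n.factorization r := by
          intro r hr
          rw [hfac, Finsupp.tsub_apply, hp.factorization, Finsupp.single_apply,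
            if_neg (fun e => hr e.symm)]
          omega
        have hfacp : m.factorization p = n.factorization p - 1 := by
          rw [hfac, Finsupp.tsub_apply, hp.factorization, Finsupp.single_apply, if_pos rfl]
        -- product over m.primeFactors equals product over S
        have hsub : m.primeFactors ⊆ S := Nat.primeFactors_mono hmd hn0'
        have hprod1 : ∏ r ∈ m.primeFactors, ((m.factorization r).factorial : ℝ) =
            ∏ r ∈ S, ((m.factorization r).factorial : ℝ) := by
          refine Finset.prod_subset hsub fun r _ hrm => ?_
          have : m.factorization r = 0 := by
            rwa [← Nat.support_factorization, Finsupp.notMem_support_iff] at hrm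
          simp [this]
        -- key natural-number identity
        have keyN : (∏ r ∈ S, (m.factorization r).factorial) * n.factorization p =
            ∏ r ∈ S, (n.factorization r).factorial := by
          rw [← Finset.mul_prod_erase S (fun r => (m.factorization r).factorial) hpS,
            ← Finset.mul_prod_erase S (fun r => (n.factorization r).factorial) hpS]
          have hrest : ∏ r ∈ S.erase p, (m.factorization r).factorial =
              ∏ r ∈ S.erase p, (n.factorization r).factorial :=
            Finset.prod_congr rfl fun r hr => by
              rw [hfacr r (Finset.ne_of_mem_erase hr)]
          rw [hrest, hfacp]
          rw [mul_comm _ (n.factorization p), ← mul_assoc,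
            Nat.mul_factorial_pred hαp.ne']
        have keyR : (∏ r ∈ S, ((m.factorization r).factorial : ℝ)) *
            (n.factorization p : ℝ) = D := by
          rw [hD, ← Nat.cast_prod, ← Nat.cast_prod, ← Nat.cast_mul, keyN]
        have hPpos : (0:ℝ) < ∏ r ∈ S, ((m.factorization r).factorial : ℝ) :=
          Finset.prod_pos fun r _ => by positivity
        have hα0 : (n.factorization p : ℝ) ≠ 0 := by positivity
        rw [IH m hmn hm0, hΩm, hprod1, ← keyR]
        field_simp
      -- final computation
      rw [hinv_rec h hinv hh hinv_eq n hn2', Finset.sum_congr rfl hstep]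
      have hsumα : ∑ p ∈ S, (n.factorization p : ℝ) = ((k : ℝ) + 1) := by
        rw [← Nat.cast_sum, ← omega_sum' n, hk]
        push_cast; ring
      have hpull : ∑ p ∈ S, (-1:ℝ)^k * (k.factorial : ℝ) * (n.factorization p : ℝ) / D =
          (-1:ℝ)^k * (k.factorial : ℝ) / D * ∑ p ∈ S, (n.factorization p : ℝ) := by
        rw [Finset.mul_sum]
        exact Finset.sum_congr rfl fun p _ => by ring
      rw [hpull, hsumα, hk, Nat.factorial_succ, pow_succ]
      push_cast
      field_simp

/-- Let `h = χ_ℙ + ε` (indicator of the primes plus the convolution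
identity) and let `hinv` be its Dirichlet inverse (characterized by `h * hinv = 1`).
Then `hinv(1) = 1` and, for every `n ≥ 2` with prime factorization
`n = p₁^{α₁} ⋯ p_r^{α_r}`, `hinv(n) · (α₁! ⋯ α_r!) = (−1)^{Ω(n)} · Ω(n)!`. -/
theorem stmt_8 (h hinv : ArithmeticFunction ℝ)
    (hh : ∀ n : ℕ, 0 < n →
      h n = (if n.Prime then 1 else 0) + (if n = 1 then 1 else 0))
    (hinv_eq : h * hinv = 1) :
    hinv 1 = 1 ∧
      ∀ n : ℕ, 2 ≤ n →
        hinv n * ∏ p ∈ n.primeFactors, ((n.factorization p).factorial : ℝ) =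
          (-1 : ℝ) ^ (ArithmeticFunction.cardFactors n) *
            ((ArithmeticFunction.cardFactors n).factorial : ℝ) := by
  constructor
  · have h1 := hinv_formula h hinv hh hinv_eq 1 one_pos
    simpa using h1
  · intro n hn
    have hD : (0:ℝ) < ∏ p ∈ n.primeFactors, ((n.factorization p).factorial : ℝ) :=
      Finset.prod_pos fun p _ => by positivity
    rw [hinv_formula h hinv hh hinv_eq n (by omega), div_mul_cancel₀ _ hD.ne']
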